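/- arXiv:1810.09169 — 3 statements merged into one kernel-verified Lean document; each statement's English description precedes it below -/
import Mathlib

section
/- Let X be a Hausdorff CLP-compact topological space with a dense subspace Y all of whose points are isolated in Y, and let Z be a subset of X such that Z \ Y is finite. Then the closure of Z in X is countably compact at Z, i.e., every infinite subset of Z has an accumulation point lying in the closure of Z. -/
/-! Preamble: graph inverse semigroups and compactness-type properties. -/

namespace GISPaper

variable {V E : Type*}

/-- `IsPathFrom src rng v l` means that the list of edges `l` is composable
and starts at the vertex `v`. -/
def IsPathFrom (src rng : E → V) : V → List E → Prop
  | _, [] => True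
  | v, e :: l => src e = v ∧ IsPathFrom src rng (rng e) l

/-- The end vertex of a list of edges starting at the vertex `v`. -/
def pathEnd (rng : E → V) : V → List E → V
  | v, [] => v
  | _, e :: l => pathEnd rng (rng e) l

theorem pathEnd_append (rng : E → V) (v : V) (l₁ l₂ : List E) :
    pathEnd rng v (l₁ ++ l₂) = pathEnd rng (pathEnd rng v l₁) l₂ := by
  induction l₁ generalizing v with
  | nil => rfl
  | cons e l ih => simpa [pathEnd] using ih (rng e)

theorem isPathFrom_append (src rng : E → V) (v : V) (l₁ l₂ : List E) :
    IsPathFrom src rng v (l₁ ++ l₂) ↔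
      IsPathFrom src rng v l₁ ∧ IsPathFrom src rng (pathEnd rng v l₁) l₂ := by
  induction l₁ generalizing v with
  | nil => simp [IsPathFrom, pathEnd]
  | cons e l ih => simp [IsPathFrom, pathEnd, ih (rng e), and_assoc]

/-- A (directed) path in the graph `(V, E, src, rng)`: a starting vertex together
with a composable list of edges (a path of length zero is just a vertex). -/
structure GPath (src rng : E → V) where
  start : V
  edges : List E
  isPath : IsPathFrom src rng start edges

/-- The range (end vertex) of a path. -/
def GPath.range {src rng : E → V} (p : GPath src rng) : V :=
  pathEnd rng p.start p.edges

/-- The nonzero elements of the graph inverse semigroup: pairs `u v⁻¹` of paths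
with `r u = r v`. -/
def GISElem (src rng : E → V) : Type _ :=
  {p : GPath src rng × GPath src rng // p.1.range = p.2.range}

/-- The graph inverse semigroup over the graph `(V, E, src, rng)`: the nonzero
elements `u v⁻¹` together with a zero element (represented by `none`). -/
def GIS (src rng : E → V) : Type _ := Option (GISElem src rng)

instance {src rng : E → V} : Zero (GIS src rng) :=
  ⟨(none : Option (GISElem src rng))⟩

open Classical in
/-- The multiplication of a graph inverse semigroup:
`u₁v₁⁻¹ · u₂v₂⁻¹ = u₁w v₂⁻¹` if `u₂ = v₁ w`, `u₁v₁⁻¹ · u₂v₂⁻¹ = u₁ (v₂ w)⁻¹` if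
`v₁ = u₂ w`, and `0` otherwise; `0` is absorbing. -/
noncomputable def GIS.mul {src rng : E → V} :
    Option (GISElem src rng) → Option (GISElem src rng) → Option (GISElem src rng)
  | some ⟨(u₁, v₁), h₁⟩, some ⟨(u₂, v₂), h₂⟩ =>
    if h : v₁.start = u₂.start ∧ v₁.edges <+: u₂.edges then
      some ⟨(⟨u₁.start, u₁.edges ++ u₂.edges.drop v₁.edges.length, by
        obtain ⟨hs, t, ht⟩ := h
        have hdrop : u₂.edges.drop v₁.edges.length = t := by
          rw [← ht, List.drop_left]
        have hu₂ := u₂.isPath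
        rw [← ht, isPathFrom_append] at hu₂
        rw [hdrop, isPathFrom_append]
        refine ⟨u₁.isPath, ?_⟩
        have he : pathEnd rng u₁.start u₁.edges = pathEnd rng u₂.start v₁.edges := by
          rw [← hs]; exact h₁
        rw [he]; exact hu₂.2⟩, v₂), by
        show pathEnd rng u₁.start (u₁.edges ++ u₂.edges.drop v₁.edges.length) = v₂.range
        obtain ⟨hs, t, ht⟩ := h
        have hdrop : u₂.edges.drop v₁.edges.length = t := by
          rw [← ht, List.drop_left]
        rw [hdrop, pathEnd_append]
        have he : pathEnd rng u₁.start u₁.edges = pathEnd rng u₂.start v₁.edges := by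
          rw [← hs]; exact h₁
        rw [he, ← pathEnd_append, ht]
        exact h₂⟩
    else if h' : u₂.start = v₁.start ∧ u₂.edges <+: v₁.edges then
      some ⟨(u₁, ⟨v₂.start, v₂.edges ++ v₁.edges.drop u₂.edges.length, by
        obtain ⟨hs, t, ht⟩ := h'
        have hdrop : v₁.edges.drop u₂.edges.length = t := by
          rw [← ht, List.drop_left]
        have hv₁ := v₁.isPath
        rw [← ht, isPathFrom_append] at hv₁
        rw [hdrop, isPathFrom_append]
        refine ⟨v₂.isPath, ?_⟩
        have he : pathEnd rng v₂.start v₂.edges = pathEnd rng v₁.start u₂.edges := by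
          rw [← hs]; exact h₂.symm
        rw [he]; exact hv₁.2⟩), by
        show u₁.range = pathEnd rng v₂.start (v₂.edges ++ v₁.edges.drop u₂.edges.length)
        obtain ⟨hs, t, ht⟩ := h'
        have hdrop : v₁.edges.drop u₂.edges.length = t := by
          rw [← ht, List.drop_left]
        have he : pathEnd rng v₂.start v₂.edges = pathEnd rng v₁.start u₂.edges := by
          rw [← hs]; exact h₂.symm
        rw [hdrop, pathEnd_append, he, ← pathEnd_append, ht]
        exact h₁⟩
    else none
  | _, _ => none

noncomputable instance {src rng : E → V} : Mul (GIS src rng) := ⟨GIS.mul⟩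

theorem GIS.zero_mul {src rng : E → V} (x : GIS src rng) : 0 * x = 0 := rfl

/-- The topology in which every nonzero point is isolated and the open
neighbourhoods of `0` are exactly the cofinite sets containing `0`. -/
def tauC (α : Type*) [Zero α] : TopologicalSpace α where
  IsOpen U := (0 : α) ∈ U → Uᶜ.Finite
  isOpen_univ := by simp
  isOpen_inter U W hU hW h := by
    rw [Set.compl_inter]
    exact (hU h.1).union (hW h.2)
  isOpen_sUnion 𝒮 h h0 := by
    obtain ⟨U, hU, hU0⟩ := h0
    exact (h U hU hU0).subset (Set.compl_subset_compl.mpr (Set.subset_sUnion_of_mem hU))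

/-- A topological space is CLP-compact if every cover by clopen sets has a
finite subcover. -/
def CLPCompact (X : Type*) [TopologicalSpace X] : Prop :=
  ∀ 𝒰 : Set (Set X), (∀ U ∈ 𝒰, IsClopen U) → ⋃₀ 𝒰 = Set.univ →
    ∃ ℱ ⊆ 𝒰, ℱ.Finite ∧ ⋃₀ ℱ = Set.univ

/-- A topological space is countably compact if every infinite subset has an
accumulation point. -/
def CountablyCompactSpace (X : Type*) [TopologicalSpace X] : Prop :=
  ∀ B : Set X, B.Infinite → ∃ x : X, AccPt x (Filter.principal B)

/-- A topological space is feebly compact if every locally finite family of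
nonempty open sets is finite. -/
def FeeblyCompact (X : Type*) [TopologicalSpace X] : Prop :=
  ∀ 𝒰 : Set (Set X), (∀ U ∈ 𝒰, IsOpen U ∧ U.Nonempty) →
    (∀ x : X, ∃ N ∈ nhds x, {U ∈ 𝒰 | (U ∩ N).Nonempty}.Finite) → 𝒰.Finite

/-- The multiplication of the bicyclic monoid on `ℕ × ℕ`. -/
def bicyclicMul (x y : ℕ × ℕ) : ℕ × ℕ :=
  (x.1 + y.1 - min x.2 y.1, x.2 + y.2 - min x.2 y.1)

/-- The multiplication of the semigroup of `X × X`-matrix units (with zero `none`). -/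
def matUnitsMul {X : Type*} [DecidableEq X] :
    Option (X × X) → Option (X × X) → Option (X × X)
  | some (a, b), some (c, d) => if b = c then some (a, d) else none
  | _, _ => none

/-- A cycle based at the vertex `e`: a path of nonzero length from `e` to `e`. -/
def HasCycleAt (src rng : E → V) (e : V) : Prop :=
  ∃ p : GPath src rng, p.edges ≠ [] ∧ p.start = e ∧ p.range = e

end GISPaper

open GISPaper in
/-- Let `X` be a Hausdorff CLP-compact space with a dense subspace `Y`
all of whose points are isolated in `Y`, and `Z ⊆ X` with `Z \ Y` finite. Then the
closure of `Z` is countably compact at `Z`: every infinite `B ⊆ Z` has an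
accumulation point lying in the closure of `Z`. -/
theorem statement0 {X : Type*} [TopologicalSpace X] [T2Space X]
    (hCLP : CLPCompact X)
    (Y : Set X) (hYdense : Dense Y)
    (hYdisc : ∀ y ∈ Y, ∃ U : Set X, IsOpen U ∧ U ∩ Y = {y})
    (Z : Set X) (hZY : (Z \ Y).Finite) :
    ∀ B ⊆ Z, B.Infinite → ∃ x ∈ closure Z, AccPt x (Filter.principal B) := by
  intro B hBZ hBinf
  -- Every point of Y is isolated in X.
  have hiso : ∀ y ∈ Y, IsOpen ({y} : Set X) := by
    intro y hy
    obtain ⟨U, hUopen, hUY⟩ := hYdisc y hy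
    have hyU : y ∈ U := by
      have : y ∈ U ∩ Y := hUY ▸ rfl
      exact this.1
    have hsub : U ⊆ closure (U ∩ Y) := hYdense.open_subset_closure_inter hUopen
    have : U ⊆ {y} := by
      rw [hUY] at hsub
      simpa using hsub
    have : U = {y} := Set.Subset.antisymm this (by simpa using hyU)
    exact this ▸ hUopen
  set B' := B ∩ Y with hB'
  have hB'inf : B'.Infinite := by
    have : B ⊆ B' ∪ (Z \ Y) := by
      intro x hx
      by_cases hxY : x ∈ Y
      · exact Or.inl ⟨hx, hxY⟩
      · exact Or.inr ⟨hBZ hx, hxY⟩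
    intro hfin
    exact hBinf ((hfin.union hZY).subset this)
  -- B' has an accumulation point
  have key : ∃ x, AccPt x (Filter.principal B') := by
    by_contra hno
    push_neg at hno
    have hnhd : ∀ x : X, ∃ U : Set X, IsOpen U ∧ x ∈ U ∧ U ∩ B' ⊆ {x} := by
      intro x
      have := hno x
      rw [accPt_iff_nhds] at this
      push_neg at this
      obtain ⟨U, hU, hU'⟩ := this
      refine ⟨interior U, isOpen_interior, mem_interior_iff_mem_nhds.mpr hU, ?_⟩
      rintro y ⟨hyU, hyB⟩
      exact hU' y ⟨interior_subset hyU, hyB⟩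
    have hB'open : IsOpen B' := by
      have : B' = ⋃ b ∈ B', {b} := by simp
      rw [this]
      exact isOpen_biUnion fun b hb => hiso b hb.2
    have hB'closed : IsClosed B' := by
      rw [← closure_subset_iff_isClosed]
      intro x hx
      obtain ⟨U, hUo, hxU, hUB⟩ := hnhd x
      obtain ⟨y, hyU, hyB⟩ := mem_closure_iff.mp hx U hUo hxU
      have : y = x := hUB ⟨hyU, hyB⟩
      exact this ▸ hyB
    set 𝒰 : Set (Set X) := insert B'ᶜ ((fun b => ({b} : Set X)) '' B') with h𝒰
    have hclopen : ∀ U ∈ 𝒰, IsClopen U := by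
      rintro U (rfl | ⟨b, hb, rfl⟩)
      · exact ⟨hB'open.isClosed_compl, hB'closed.isOpen_compl⟩
      · exact ⟨isClosed_singleton, hiso b hb.2⟩
    have hcover : ⋃₀ 𝒰 = Set.univ := by
      ext x
      simp only [Set.mem_sUnion, Set.mem_univ, iff_true, h𝒰]
      by_cases hx : x ∈ B'
      · exact ⟨{x}, Or.inr ⟨x, hx, rfl⟩, rfl⟩
      · exact ⟨B'ᶜ, Or.inl rfl, hx⟩
    obtain ⟨ℱ, hℱsub, hℱfin, hℱcover⟩ := hCLP 𝒰 hclopen hcover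
    have : B' ⊆ ⋃₀ (ℱ \ {B'ᶜ}) := by
      intro b hb
      have : b ∈ ⋃₀ ℱ := hℱcover ▸ Set.mem_univ b
      obtain ⟨U, hU, hbU⟩ := this
      by_cases hUc : U = B'ᶜ
      · subst hUc; exact absurd hb hbU
      · exact ⟨U, ⟨hU, hUc⟩, hbU⟩
    have hsing : ∀ U ∈ ℱ \ {B'ᶜ}, ∃ b, U = {b} := by
      rintro U ⟨hU, hUc⟩
      rcases hℱsub hU with rfl | ⟨b, _, rfl⟩
      · exact absurd rfl hUc
      · exact ⟨b, rfl⟩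
    have hfin : (⋃₀ (ℱ \ {B'ᶜ})).Finite := by
      refine Set.Finite.sUnion (hℱfin.subset Set.diff_subset) ?_
      intro U hU
      obtain ⟨b, rfl⟩ := hsing U hU
      exact Set.finite_singleton b
    exact hB'inf (hfin.subset this)
  obtain ⟨x, hx⟩ := key
  have hacc : AccPt x (Filter.principal B) :=
    hx.mono (Filter.principal_mono.mpr Set.inter_subset_left)
  refine ⟨x, ?_, hacc⟩
  have : x ∈ closure B' := by
    rw [mem_closure_iff_nhds]
    intro U hU
    obtain ⟨y, hy, _⟩ := (accPt_iff_nhds (x := x) (C := B')).mp hx U hU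
    exact ⟨y, hy⟩
  exact closure_mono (hB'.symm ▸ Set.inter_subset_left.trans hBZ) this
end

section
/- Let X be a Hausdorff CLP-compact topological space with a dense subspace Y all of whose points are isolated in Y, and let Z be a subset of X such that Z \ Y is finite. If the set cl(Z) \ Z is compact (where cl(Z) is the closure of Z in X), then cl(Z) is compact. -/
open GISPaper in
/-- Let `X` be a Hausdorff CLP-compact space with a dense subspace `Y`
all of whose points are isolated in `Y`, and `Z ⊆ X` with `Z \ Y` finite. If
`closure Z \ Z` is compact, then `closure Z` is compact. -/
theorem statement1 {X : Type*} [TopologicalSpace X] [T2Space X]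
    (hCLP : CLPCompact X)
    (Y : Set X) (hYdense : Dense Y)
    (hYdisc : ∀ y ∈ Y, ∃ U : Set X, IsOpen U ∧ U ∩ Y = {y})
    (Z : Set X) (hZY : (Z \ Y).Finite)
    (hK : IsCompact (closure Z \ Z)) :
    IsCompact (closure Z) := by
  -- Step 1: every point of `Y` is isolated in `X`.
  have hYiso : ∀ y ∈ Y, IsOpen ({y} : Set X) := by
    intro y hy
    obtain ⟨U, hUo, hUY⟩ := hYdisc y hy
    have hsub : U ⊆ closure (U ∩ Y) := hYdense.open_subset_closure_inter hUo
    have hUy : U = {y} := by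
      apply subset_antisymm
      · calc U ⊆ closure (U ∩ Y) := hsub
          _ = closure {y} := by rw [hUY]
          _ = {y} := closure_singleton
      · intro x hx
        rw [Set.mem_singleton_iff] at hx
        subst hx
        have : x ∈ U ∩ Y := by rw [hUY]; rfl
        exact this.1
    rw [← hUy]; exact hUo
  apply isCompact_of_finite_subcover
  intro ι U hUo hcov
  classical
  obtain ⟨t₁, ht₁⟩ := hK.elim_finite_subcover U hUo (Set.diff_subset.trans hcov)
  obtain ⟨t₂, ht₂⟩ := hZY.isCompact.elim_finite_subcover U hUo
    ((Set.diff_subset.trans subset_closure).trans hcov)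
  set W : Set X := ⋃ i ∈ (t₁ ∪ t₂), U i with hW
  have hWo : IsOpen W := isOpen_biUnion fun i _ => hUo i
  have ht₁W : (⋃ i ∈ t₁, U i) ⊆ W := by
    rw [hW]
    intro x hx
    simp only [Set.mem_iUnion, Finset.mem_union, exists_prop] at hx ⊢
    obtain ⟨i, hi, hx⟩ := hx
    exact ⟨i, Or.inl hi, hx⟩
  have ht₂W : (⋃ i ∈ t₂, U i) ⊆ W := by
    rw [hW]
    intro x hx
    simp only [Set.mem_iUnion, Finset.mem_union, exists_prop] at hx ⊢
    obtain ⟨i, hi, hx⟩ := hx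
    exact ⟨i, Or.inr hi, hx⟩
  set S : Set X := closure Z \ W with hSdef
  have hSY : S ⊆ Z ∩ Y := by
    intro x hx
    have hxZ : x ∈ Z := by
      by_contra h
      exact hx.2 (ht₁W (ht₁ ⟨hx.1, h⟩))
    refine ⟨hxZ, ?_⟩
    by_contra h
    exact hx.2 (ht₂W (ht₂ ⟨hxZ, h⟩))
  have hSclosed : IsClosed S := isClosed_closure.sdiff hWo
  have hSopen : IsOpen S := by
    rw [isOpen_iff_mem_nhds]
    intro x hx
    exact Filter.mem_of_superset
      ((hYiso x (hSY hx).2).mem_nhds rfl) (by simpa using hx)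
  have hSclopen : IsClopen S := ⟨hSclosed, hSopen⟩
  -- Step 2: use CLP-compactness to show S is finite.
  have hSfin : S.Finite := by
    obtain ⟨ℱ, hℱsub, hℱfin, hℱcov⟩ := hCLP (insert Sᶜ ((fun x => ({x} : Set X)) '' S))
      (by
        rintro V hV
        rcases Set.mem_insert_iff.mp hV with rfl | ⟨x, hx, rfl⟩
        · exact hSclopen.compl
        · exact ⟨isClosed_singleton, hYiso x (hSY hx).2⟩)
      (by
        apply Set.eq_univ_of_forall
        intro x
        by_cases hx : x ∈ S
        · exact ⟨{x}, Set.mem_insert_of_mem _ ⟨x, hx, rfl⟩, rfl⟩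
        · exact ⟨Sᶜ, Set.mem_insert _ _, hx⟩)
    have hsub : S ⊆ ⋃₀ (ℱ \ {Sᶜ}) := by
      intro x hx
      have : x ∈ ⋃₀ ℱ := hℱcov ▸ Set.mem_univ x
      obtain ⟨V, hV, hxV⟩ := this
      refine ⟨V, ⟨hV, ?_⟩, hxV⟩
      rintro rfl
      exact hxV hx
    refine (Set.Finite.sUnion (hℱfin.diff : (ℱ \ {Sᶜ}).Finite) ?_).subset hsub
    rintro V ⟨hV, hVne⟩
    rcases Set.mem_insert_iff.mp (hℱsub hV) with rfl | ⟨x, _, rfl⟩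
    · exact absurd rfl hVne
    · exact Set.finite_singleton x
  -- Step 3: assemble the finite subcover.
  obtain ⟨t₃, ht₃⟩ := hSfin.isCompact.elim_finite_subcover U hUo
    (Set.diff_subset.trans hcov)
  refine ⟨t₁ ∪ t₂ ∪ t₃, ?_⟩
  intro x hx
  by_cases hxW : x ∈ W
  · rw [hW] at hxW
    simp only [Set.mem_iUnion, Finset.mem_union, exists_prop] at hxW ⊢
    obtain ⟨i, hi, hxU⟩ := hxW
    exact ⟨i, Or.inl hi, hxU⟩
  · have hxS : x ∈ S := ⟨hx, hxW⟩
    have := ht₃ hxS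
    simp only [Set.mem_iUnion, Finset.mem_union, exists_prop] at this ⊢
    obtain ⟨i, hi, hxU⟩ := this
    exact ⟨i, Or.inr hi, hxU⟩
end

section
/- Let τ be a Hausdorff topology on a graph inverse semigroup G(E) making the multiplication separately continuous. Then the following conditions are equivalent: (1) (G(E), τ) is compact; (2) (G(E), τ) is countably compact; (3) (G(E), τ) is feebly compact; (4) (G(E), τ) is CLP-compact; (5) τ = τ_c. -/
/-! Preamble: graph inverse semigroups and compactness-type properties. -/

namespace GISPaper

variable {V E : Type*}

variable {V E : Type*} {src rng : E → V}

theorem GPath.ext' {p q : GPath src rng} (h1 : p.start = q.start)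
    (h2 : p.edges = q.edges) : p = q := by
  cases p; cases q; simp_all

theorem elem_ext {a b : GISElem src rng} (h1 : a.1.1.start = b.1.1.start)
    (h2 : a.1.1.edges = b.1.1.edges) (h3 : a.1.2.start = b.1.2.start)
    (h4 : a.1.2.edges = b.1.2.edges) : a = b :=
  Subtype.ext (Prod.ext (GPath.ext' h1 h2) (GPath.ext' h3 h4))

/-- Inclusion of nonzero elements into the semigroup. -/
def el (a : GISElem src rng) : GIS src rng := some a

theorem el_eq {a b : GISElem src rng} (h1 : a.1.1.start = b.1.1.start)
    (h2 : a.1.1.edges = b.1.1.edges) (h3 : a.1.2.start = b.1.2.start)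
    (h4 : a.1.2.edges = b.1.2.edges) : el a = el b := by
  rw [elem_ext h1 h2 h3 h4]

theorem zero_def : (0 : GIS src rng) = none := rfl

theorem el_ne_zero (a : GISElem src rng) : el a ≠ 0 := fun h =>
  Option.some_ne_none a h

theorem el_inj {a b : GISElem src rng} (h : el a = el b) : a = b :=
  Option.some.inj h

theorem GIS.exists_el {y : GIS src rng} (h : y ≠ 0) : ∃ b, y = el b :=
  Option.ne_none_iff_exists'.mp h

theorem mul_zero' (a : GIS src rng) : a * 0 = 0 := by
  cases a <;> rfl

theorem isPathFrom_cons {v : V} {f : E} {l : List E}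
    (h : IsPathFrom src rng v (f :: l)) :
    src f = v ∧ IsPathFrom src rng (rng f) l := h

theorem GPath.range_cons (p : GPath src rng) {f : E} {l : List E}
    (h : p.edges = f :: l) : p.range = pathEnd rng (rng f) l := by
  unfold GPath.range; rw [h]; rfl

theorem GPath.range_nil (p : GPath src rng) (h : p.edges = []) :
    p.range = p.start := by
  unfold GPath.range; rw [h]; rfl

theorem mul_b1 {a b c : GISElem src rng}
    (h1 : a.1.2.start = b.1.1.start) (h2 : a.1.2.edges <+: b.1.1.edges)
    (hc1 : c.1.1.start = a.1.1.start)
    (hc2 : c.1.1.edges = a.1.1.edges ++ b.1.1.edges.drop a.1.2.edges.length)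
    (hc3 : c.1.2.start = b.1.2.start) (hc4 : c.1.2.edges = b.1.2.edges) :
    el a * el b = el c := by
  obtain ⟨⟨u₁, v₁⟩, ha⟩ := a
  obtain ⟨⟨u₂, v₂⟩, hb⟩ := b
  show GIS.mul _ _ = _
  unfold el
  simp only [GIS.mul]
  rw [dif_pos ⟨h1, h2⟩]
  exact congrArg some (elem_ext hc1.symm hc2.symm hc3.symm hc4.symm)

theorem mul_b2 {a b c : GISElem src rng}
    (hn : ¬(a.1.2.start = b.1.1.start ∧ a.1.2.edges <+: b.1.1.edges))
    (h1 : b.1.1.start = a.1.2.start) (h2 : b.1.1.edges <+: a.1.2.edges)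
    (hc1 : c.1.1.start = a.1.1.start) (hc2 : c.1.1.edges = a.1.1.edges)
    (hc3 : c.1.2.start = b.1.2.start)
    (hc4 : c.1.2.edges = b.1.2.edges ++ a.1.2.edges.drop b.1.1.edges.length) :
    el a * el b = el c := by
  obtain ⟨⟨u₁, v₁⟩, ha⟩ := a
  obtain ⟨⟨u₂, v₂⟩, hb⟩ := b
  show GIS.mul _ _ = _
  unfold el
  simp only [GIS.mul]
  rw [dif_neg hn, dif_pos ⟨h1, h2⟩]
  exact congrArg some (elem_ext hc1.symm hc2.symm hc3.symm hc4.symm)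

theorem mul_b0 {a b : GISElem src rng}
    (hn1 : ¬(a.1.2.start = b.1.1.start ∧ a.1.2.edges <+: b.1.1.edges))
    (hn2 : ¬(b.1.1.start = a.1.2.start ∧ b.1.1.edges <+: a.1.2.edges)) :
    el a * el b = 0 := by
  obtain ⟨⟨u₁, v₁⟩, ha⟩ := a
  obtain ⟨⟨u₂, v₂⟩, hb⟩ := b
  show GIS.mul _ _ = _
  unfold el
  simp only [GIS.mul]
  rw [dif_neg hn1, dif_neg hn2]
  rfl

theorem mul_cases {a b c : GISElem src rng} (h : el a * el b = el c) :
    (a.1.2.start = b.1.1.start ∧ a.1.2.edges <+: b.1.1.edges ∧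
      c.1.1.start = a.1.1.start ∧
      c.1.1.edges = a.1.1.edges ++ b.1.1.edges.drop a.1.2.edges.length ∧
      c.1.2.start = b.1.2.start ∧ c.1.2.edges = b.1.2.edges) ∨
    (b.1.1.start = a.1.2.start ∧ b.1.1.edges <+: a.1.2.edges ∧
      c.1.1.start = a.1.1.start ∧ c.1.1.edges = a.1.1.edges ∧
      c.1.2.start = b.1.2.start ∧
      c.1.2.edges = b.1.2.edges ++ a.1.2.edges.drop b.1.1.edges.length) := by
  obtain ⟨⟨u₁, v₁⟩, ha⟩ := a
  obtain ⟨⟨u₂, v₂⟩, hb⟩ := b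
  have h' : GIS.mul (some ⟨(u₁, v₁), ha⟩) (some ⟨(u₂, v₂), hb⟩) = some c := h
  simp only [GIS.mul] at h'
  split_ifs at h' with h1 h2
  · have hc := Option.some.inj h'
    subst hc
    exact Or.inl ⟨h1.1, h1.2, rfl, rfl, rfl, rfl⟩
  · have hc := Option.some.inj h'
    subst hc
    exact Or.inr ⟨h2.1, h2.2, rfl, rfl, rfl, rfl⟩

/-! ### Distinguished elements -/

/-- The trivial path at a vertex. -/
def epath (w : V) : GPath src rng := ⟨w, [], trivial⟩

/-- The path consisting of a single edge. -/
def fpath (f : E) : GPath src rng :=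
  ⟨src f, [f], (⟨rfl, trivial⟩ : src f = src f ∧ IsPathFrom src rng (rng f) [])⟩

/-- The vertex idempotent as an element. -/
def eVe (w : V) : GISElem src rng := ⟨(epath w, epath w), rfl⟩

/-- The vertex idempotent. -/
def eV (w : V) : GIS src rng := el (eVe w)

/-- `f`, as an element. -/
def fPe (f : E) : GISElem src rng := ⟨(fpath f, epath (rng f)), rfl⟩

def fP (f : E) : GIS src rng := el (fPe f)

/-- `f⁻¹`, as an element. -/
def fIe (f : E) : GISElem src rng := ⟨(epath (rng f), fpath f), rfl⟩

def fI (f : E) : GIS src rng := el (fIe f)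

/-- `f f⁻¹`, as an element. -/
def fEe (f : E) : GISElem src rng := ⟨(fpath f, fpath f), rfl⟩

def fE (f : E) : GIS src rng := el (fEe f)

@[simp] theorem eVe_11s (w : V) : (eVe w : GISElem src rng).1.1.start = w := rfl
@[simp] theorem eVe_11e (w : V) : (eVe w : GISElem src rng).1.1.edges = [] := rfl
@[simp] theorem eVe_12s (w : V) : (eVe w : GISElem src rng).1.2.start = w := rfl
@[simp] theorem eVe_12e (w : V) : (eVe w : GISElem src rng).1.2.edges = [] := rfl
@[simp] theorem fPe_11s (f : E) : (fPe f : GISElem src rng).1.1.start = src f := rfl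
@[simp] theorem fPe_11e (f : E) : (fPe f : GISElem src rng).1.1.edges = [f] := rfl
@[simp] theorem fPe_12s (f : E) : (fPe f : GISElem src rng).1.2.start = rng f := rfl
@[simp] theorem fPe_12e (f : E) : (fPe f : GISElem src rng).1.2.edges = [] := rfl
@[simp] theorem fIe_11s (f : E) : (fIe f : GISElem src rng).1.1.start = rng f := rfl
@[simp] theorem fIe_11e (f : E) : (fIe f : GISElem src rng).1.1.edges = [] := rfl
@[simp] theorem fIe_12s (f : E) : (fIe f : GISElem src rng).1.2.start = src f := rfl
@[simp] theorem fIe_12e (f : E) : (fIe f : GISElem src rng).1.2.edges = [f] := rfl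
@[simp] theorem fEe_11s (f : E) : (fEe f : GISElem src rng).1.1.start = src f := rfl
@[simp] theorem fEe_11e (f : E) : (fEe f : GISElem src rng).1.1.edges = [f] := rfl
@[simp] theorem fEe_12s (f : E) : (fEe f : GISElem src rng).1.2.start = src f := rfl
@[simp] theorem fEe_12e (f : E) : (fEe f : GISElem src rng).1.2.edges = [f] := rfl

/-! ### Computation lemmas -/

/-- C1 -/
theorem eV_mul_el {a : GISElem src rng} {w : V} (h : a.1.1.start = w) :
    (eV w : GIS src rng) * el a = el a := by
  refine mul_b1 (a := eVe w) (by simp [h]) (by simp) h (by simp) rfl rfl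

/-- C1' -/
theorem eV_mul_el_ne {a : GISElem src rng} {w : V} (h : a.1.1.start ≠ w) :
    (eV w : GIS src rng) * el a = 0 := by
  refine mul_b0 (a := eVe w) (fun hc => h ?_) (fun hc => h ?_)
  · simpa using hc.1.symm
  · simpa using hc.1

/-- C2 -/
theorem el_mul_eV {a : GISElem src rng} {w : V} (h : a.1.2.start = w) :
    el a * (eV w : GIS src rng) = el a := by
  rcases hq : a.1.2.edges with _ | ⟨x, xs⟩
  · exact mul_b1 (b := eVe w) (by simp [h]) (by simp [hq]) rfl (by simp [hq])
      (by simp [h]) (by simp [hq])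
  · exact mul_b2 (b := eVe w) (fun hc => by simp [hq] at hc) (by simp [h])
      (by simp) rfl rfl (by simp [h]) (by simp)

/-- C2' -/
theorem el_mul_eV_ne {a : GISElem src rng} {w : V} (h : a.1.2.start ≠ w) :
    el a * (eV w : GIS src rng) = 0 := by
  refine mul_b0 (b := eVe w) (fun hc => h ?_) (fun hc => h ?_)
  · simpa using hc.1
  · simpa using hc.1.symm

/-- C3 -/
theorem fE_mul_eV {f : E} {w : V} (h : src f = w) :
    (fE f : GIS src rng) * eV w = fE f := by
  refine mul_b2 (a := fEe f) (b := eVe w) (c := fEe f)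
    (fun hc => by simp at hc) (by simp [h]) (by simp) rfl rfl (by simp [h]) (by simp)

/-- C4 -/
theorem fE_mul_el {a : GISElem src rng} {f : E} {l : List E}
    (h1 : a.1.1.edges = f :: l) (h2 : a.1.1.start = src f) :
    (fE f : GIS src rng) * el a = el a := by
  refine mul_b1 (a := fEe f) (by simp [h2]) (by rw [h1]; simp)
    h2 (by simp [h1]) rfl rfl

/-- C4' -/
theorem fE_mul_el_ne {a : GISElem src rng} {f g : E} {l : List E}
    (h1 : a.1.1.edges = g :: l) (hg : g ≠ f) :
    (fE f : GIS src rng) * el a = 0 := by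
  refine mul_b0 (a := fEe f) (fun hc => hg ?_) (fun hc => hg ?_)
  · have := hc.2
    rw [h1] at this
    simp [List.cons_prefix_cons] at this
    exact this.symm
  · have := hc.2
    rw [h1] at this
    simp [List.cons_prefix_cons] at this
    exact this.1

/-- C5 -/
theorem eV_mul_fE {g : E} {w : V} (h : src g = w) :
    (eV w : GIS src rng) * fE g = fE g := by
  refine mul_b1 (a := eVe w) (b := fEe g) (c := fEe g)
    (by simp [h]) (by simp) (by simp [h]) (by simp) rfl rfl

/-- C6 -/
theorem el_mul_fE {a : GISElem src rng} {g : E} {l : List E}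
    (h1 : a.1.2.edges = g :: l) (h2 : a.1.2.start = src g) :
    el a * (fE g : GIS src rng) = el a := by
  rcases l with _ | ⟨x, xs⟩
  · exact mul_b1 (b := fEe g) (by simp [h2]) (by simp [h1]) rfl
      (by simp [h1]) (by simp [h2]) (by simp [h1])
  · refine mul_b2 (b := fEe g) (fun hc => ?_) (by simp [h2]) ?_ rfl rfl
      (by simp [h2]) (by simp [h1])
    · have := hc.2
      rw [h1] at this
      simp [List.cons_prefix_cons] at this
    · rw [h1]
      simp

/-- C6' -/
theorem el_mul_fE_ne {a : GISElem src rng} {g g' : E} {l : List E}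
    (h1 : a.1.2.edges = g' :: l) (hg : g' ≠ g) :
    el a * (fE g : GIS src rng) = 0 := by
  refine mul_b0 (b := fEe g) (fun hc => hg ?_) (fun hc => hg ?_)
  · have := hc.2
    rw [h1] at this
    simp [List.cons_prefix_cons] at this
    exact this.1
  · have := hc.2
    rw [h1] at this
    simp [List.cons_prefix_cons] at this
    exact this.symm

/-- C7 -/
theorem fI_mul_el {a c : GISElem src rng} {f : E} {l : List E}
    (hu : a.1.1.edges = f :: l) (hs : a.1.1.start = src f)
    (hc1 : c.1.1.start = rng f) (hc2 : c.1.1.edges = l)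
    (hc3 : c.1.2.start = a.1.2.start) (hc4 : c.1.2.edges = a.1.2.edges) :
    (fI f : GIS src rng) * el a = el c := by
  refine mul_b1 (a := fIe f) (by simp [hs]) (by rw [hu]; simp)
    (by simp [hc1]) (by simp [hu, hc2]) hc3 hc4

/-- C8 -/
theorem fP_mul_el {a c : GISElem src rng} {f : E}
    (hs : a.1.1.start = rng f)
    (hc1 : c.1.1.start = src f) (hc2 : c.1.1.edges = f :: a.1.1.edges)
    (hc3 : c.1.2.start = a.1.2.start) (hc4 : c.1.2.edges = a.1.2.edges) :
    (fP f : GIS src rng) * el a = el c := by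
  refine mul_b1 (a := fPe f) (by simp [hs]) (by simp) (by simp [hc1])
    (by simp [hc2]) hc3 hc4

/-- D1 -/
theorem fI_mul_eV {f : E} {w : V} (h : src f = w) :
    (fI f : GIS src rng) * eV w = fI f := by
  refine mul_b2 (a := fIe f) (b := eVe w) (c := fIe f)
    (fun hc => by simp at hc) (by simp [h]) (by simp) rfl rfl (by simp [h]) (by simp)

/-- D2 -/
theorem fP_mul_fI (f : E) : (fP f : GIS src rng) * fI f = fE f := by
  refine mul_b1 (a := fPe f) (b := fIe f) (c := fEe f)
    (by simp) (by simp) (by simp) (by simp) (by simp) (by simp)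

/-- D3 -/
theorem eV_mul_fP {g : E} {w : V} (h : src g = w) :
    (eV w : GIS src rng) * fP g = fP g := by
  refine mul_b1 (a := eVe w) (b := fPe g) (c := fPe g)
    (by simp [h]) (by simp) (by simp [h]) (by simp) (by simp) (by simp)

/-- C10 -/
theorem el_mul_fP {a c : GISElem src rng} {g : E} {l : List E}
    (hq : a.1.2.edges = g :: l) (hs : a.1.2.start = src g)
    (hc1 : c.1.1.start = a.1.1.start) (hc2 : c.1.1.edges = a.1.1.edges)
    (hc3 : c.1.2.start = rng g) (hc4 : c.1.2.edges = l) :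
    el a * (fP g : GIS src rng) = el c := by
  rcases l with _ | ⟨x, xs⟩
  · exact mul_b1 (b := fPe g) (by simp [hs]) (by simp [hq]) hc1
      (by simp [hq, hc2]) (by simp [hc3]) (by simp [hc4])
  · refine mul_b2 (b := fPe g) (fun hc => ?_) (by simp [hs]) ?_ hc1 hc2
      (by simp [hc3]) (by simp [hq, hc4])
    · have := hc.2
      rw [hq] at this
      simp [List.cons_prefix_cons] at this
    · rw [hq]
      simp

/-- C11 -/
theorem el_mul_fI {a c : GISElem src rng} {g : E}
    (hs : a.1.2.start = rng g)
    (hc1 : c.1.1.start = a.1.1.start) (hc2 : c.1.1.edges = a.1.1.edges)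
    (hc3 : c.1.2.start = src g) (hc4 : c.1.2.edges = g :: a.1.2.edges) :
    el a * (fI g : GIS src rng) = el c := by
  rcases hq : a.1.2.edges with _ | ⟨x, xs⟩
  · exact mul_b1 (b := fIe g) (by simp [hs]) (by simp [hq]) hc1
      (by simp [hq, hc2]) (by simp [hc3]) (by simp [hq, hc4])
  · exact mul_b2 (b := fIe g) (fun hc => by simp [hq] at hc) (by simp [hs])
      (by simp) hc1 hc2 (by simp [hc3]) (by simp [hc4])
/-! ### Isolation of nonzero points -/

theorem eV_ne_fE (w : V) (f : E) : (eV w : GIS src rng) ≠ fE f := by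
  intro h
  have := congrArg (fun x : GISElem src rng => x.1.1.edges) (el_inj h)
  simp at this

section Isolation

variable [TopologicalSpace (GIS src rng)] [T2Space (GIS src rng)]

theorem isolated_vertex
    (hsep : ∀ a : GIS src rng,
      Continuous (fun x => a * x) ∧ Continuous (fun x => x * a))
    (w : V) : IsOpen ({eV w} : Set (GIS src rng)) := by
  by_contra hni
  have hne : ∀ U : Set (GIS src rng), IsOpen U → eV w ∈ U → ∃ t ∈ U, t ≠ eV w := by
    intro U hU hUe
    by_contra hcon
    push_neg at hcon
    have : U = {eV w} := Set.eq_singleton_iff_unique_mem.mpr ⟨hUe, hcon⟩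
    exact hni (this ▸ hU)
  -- Case A : accumulation by elements with nonempty first path
  by_cases HA : ∀ U : Set (GIS src rng), IsOpen U → eV w ∈ U →
      ∃ a : GISElem src rng, el a ∈ U ∧ a.1.1.start = w ∧ a.1.2.start = w ∧
        el a ≠ eV w ∧ a.1.1.edges ≠ []
  · obtain ⟨a₀, -, ha₀s, -, -, ha₀e⟩ := HA Set.univ isOpen_univ (Set.mem_univ _)
    obtain ⟨f₀, l₀, hl₀⟩ := List.exists_cons_of_ne_nil ha₀e
    have hf₀ : src f₀ = w := by
      have hp := isPathFrom_cons (hl₀ ▸ a₀.1.1.isPath)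
      exact hp.1.trans ha₀s
    obtain ⟨U₂, W₂, hU₂, hW₂, hfEU₂, h0W₂, hd₂⟩ :=
      t2_separation (el_ne_zero (fEe f₀) : (fE f₀ : GIS src rng) ≠ 0)
    obtain ⟨U₁, W₁, hU₁, hW₁, heU₁, hfEW₁, hd₁⟩ := t2_separation (eV_ne_fE (src := src) (rng := rng) w f₀)
    have hμ : Continuous (fun t : GIS src rng => fE f₀ * t) := (hsep _).1
    have hΦ : Continuous (fun t : GIS src rng => fP f₀ * (fI f₀ * t)) :=
      (hsep (fP f₀)).1.comp (hsep (fI f₀)).1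
    have hμe : (fE f₀ : GIS src rng) * eV w = fE f₀ := fE_mul_eV hf₀
    have hΦe : (fP f₀ : GIS src rng) * (fI f₀ * eV w) = fE f₀ := by
      rw [fI_mul_eV hf₀, fP_mul_fI]
    have hVo : IsOpen (U₁ ∩ ((fun t : GIS src rng => fE f₀ * t) ⁻¹' U₂) ∩
        ((fun t : GIS src rng => fP f₀ * (fI f₀ * t)) ⁻¹' W₁)) :=
      (hU₁.inter (hU₂.preimage hμ)).inter (hW₁.preimage hΦ)
    have heV : eV w ∈ U₁ ∩ ((fun t : GIS src rng => fE f₀ * t) ⁻¹' U₂) ∩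
        ((fun t : GIS src rng => fP f₀ * (fI f₀ * t)) ⁻¹' W₁) := by
      refine ⟨⟨heU₁, ?_⟩, ?_⟩
      · simp only [Set.mem_preimage, hμe]; exact hfEU₂
      · simp only [Set.mem_preimage, hΦe]; exact hfEW₁
    obtain ⟨a, ⟨⟨haU₁, haμ⟩, haΦ⟩, has1, has2, hane, haedge⟩ := HA _ hVo heV
    obtain ⟨g, l, hgl⟩ := List.exists_cons_of_ne_nil haedge
    simp only [Set.mem_preimage] at haμ haΦ
    have hg : g = f₀ := by
      by_contra hgne
      rw [fE_mul_el_ne hgl hgne] at haμ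
      exact (Set.disjoint_left.mp hd₂ haμ) h0W₂
    subst hg
    have hstart : a.1.1.start = src g := has1.trans hf₀.symm
    have hpath := isPathFrom_cons (hgl ▸ a.1.1.isPath)
    have hΦa : (fP g : GIS src rng) * (fI g * el a) = el a := by
      rw [fI_mul_el (c := ⟨(⟨rng g, l, hpath.2⟩, a.1.2),
          ((a.1.1.range_cons hgl).symm.trans a.2)⟩) hgl hstart rfl rfl rfl rfl]
      exact fP_mul_el rfl hstart hgl rfl rfl
    rw [hΦa] at haΦ
    exact (Set.disjoint_left.mp hd₁ haU₁) haΦ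
  by_cases HB : ∀ U : Set (GIS src rng), IsOpen U → eV w ∈ U →
      ∃ a : GISElem src rng, el a ∈ U ∧ a.1.1.start = w ∧ a.1.2.start = w ∧
        el a ≠ eV w ∧ a.1.2.edges ≠ []
  · obtain ⟨a₀, -, -, ha₀s, -, ha₀e⟩ := HB Set.univ isOpen_univ (Set.mem_univ _)
    obtain ⟨g₀, l₀, hl₀⟩ := List.exists_cons_of_ne_nil ha₀e
    have hg₀ : src g₀ = w := by
      have hp := isPathFrom_cons (hl₀ ▸ a₀.1.2.isPath)
      exact hp.1.trans ha₀s
    obtain ⟨U₂, W₂, hU₂, hW₂, hfEU₂, h0W₂, hd₂⟩ :=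
      t2_separation (el_ne_zero (fEe g₀) : (fE g₀ : GIS src rng) ≠ 0)
    obtain ⟨U₁, W₁, hU₁, hW₁, heU₁, hfEW₁, hd₁⟩ := t2_separation (eV_ne_fE (src := src) (rng := rng) w g₀)
    have hμ : Continuous (fun t : GIS src rng => t * fE g₀) := (hsep _).2
    have hΦ : Continuous (fun t : GIS src rng => (t * fP g₀) * fI g₀) :=
      (hsep (fI g₀)).2.comp (hsep (fP g₀)).2
    have hμe : (eV w : GIS src rng) * fE g₀ = fE g₀ := eV_mul_fE hg₀
    have hΦe : ((eV w : GIS src rng) * fP g₀) * fI g₀ = fE g₀ := by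
      rw [eV_mul_fP hg₀, fP_mul_fI]
    have hVo : IsOpen (U₁ ∩ ((fun t : GIS src rng => t * fE g₀) ⁻¹' U₂) ∩
        ((fun t : GIS src rng => (t * fP g₀) * fI g₀) ⁻¹' W₁)) :=
      (hU₁.inter (hU₂.preimage hμ)).inter (hW₁.preimage hΦ)
    have heV : eV w ∈ U₁ ∩ ((fun t : GIS src rng => t * fE g₀) ⁻¹' U₂) ∩
        ((fun t : GIS src rng => (t * fP g₀) * fI g₀) ⁻¹' W₁) := by
      refine ⟨⟨heU₁, ?_⟩, ?_⟩
      · simp only [Set.mem_preimage, hμe]; exact hfEU₂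
      · simp only [Set.mem_preimage, hΦe]; exact hfEW₁
    obtain ⟨a, ⟨⟨haU₁, haμ⟩, haΦ⟩, has1, has2, hane, haedge⟩ := HB _ hVo heV
    obtain ⟨g, l, hgl⟩ := List.exists_cons_of_ne_nil haedge
    simp only [Set.mem_preimage] at haμ haΦ
    have hg : g = g₀ := by
      by_contra hgne
      rw [el_mul_fE_ne hgl hgne] at haμ
      exact (Set.disjoint_left.mp hd₂ haμ) h0W₂
    subst hg
    have hstart : a.1.2.start = src g := has2.trans hg₀.symm
    have hpath := isPathFrom_cons (hgl ▸ a.1.2.isPath)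
    have hΦa : ((el a : GIS src rng) * fP g) * fI g = el a := by
      rw [el_mul_fP (c := ⟨(a.1.1, ⟨rng g, l, hpath.2⟩),
          (a.2.trans (a.1.2.range_cons hgl))⟩) hgl hstart rfl rfl rfl rfl]
      exact el_mul_fI rfl rfl rfl hstart hgl
    rw [hΦa] at haΦ
    exact (Set.disjoint_left.mp hd₁ haU₁) haΦ
  -- Dichotomy : one of the two cases must occur
  push_neg at HA HB
  obtain ⟨UA, hUAo, hUAe, hA⟩ := HA
  obtain ⟨UB, hUBo, hUBe, hB⟩ := HB
  obtain ⟨U₀, W₀, hU₀, hW₀, heU₀, h0W₀, hd₀⟩ :=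
    t2_separation (el_ne_zero (eVe w) : (eV w : GIS src rng) ≠ 0)
  have hφ : Continuous (fun t : GIS src rng => (eV w * t) * eV w) :=
    (hsep (eV w)).2.comp (hsep (eV w)).1
  have h1 : (eV w : GIS src rng) * eV w = eV w := eV_mul_el (a := eVe w) (eVe_11s w)
  have hφe : ((eV w : GIS src rng) * eV w) * eV w = eV w := by
    rw [h1]; exact el_mul_eV (a := eVe w) (eVe_12s w)
  have hVo : IsOpen (UA ∩ UB ∩ ((fun t : GIS src rng => (eV w * t) * eV w) ⁻¹' U₀)) :=
    (hUAo.inter hUBo).inter (hU₀.preimage hφ)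
  have heV : eV w ∈ UA ∩ UB ∩ ((fun t : GIS src rng => (eV w * t) * eV w) ⁻¹' U₀) :=
    ⟨⟨hUAe, hUBe⟩, by simp only [Set.mem_preimage, hφe]; exact heU₀⟩
  obtain ⟨t, ⟨⟨htA, htB⟩, htφ⟩, hte⟩ := hne _ hVo heV
  simp only [Set.mem_preimage] at htφ
  have hφt0 : ((eV w : GIS src rng) * t) * eV w ≠ 0 := by
    intro h
    rw [h] at htφ
    exact (Set.disjoint_left.mp hd₀ htφ) h0W₀
  have ht0 : t ≠ 0 := by
    intro h
    rw [h, mul_zero', GIS.zero_mul] at hφt0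
    exact hφt0 rfl
  obtain ⟨b, rfl⟩ := GIS.exists_el ht0
  have hb1 : b.1.1.start = w := by
    by_contra hb1
    rw [eV_mul_el_ne hb1, GIS.zero_mul] at hφt0
    exact hφt0 rfl
  have hb2 : b.1.2.start = w := by
    by_contra hb2
    rw [eV_mul_el hb1, el_mul_eV_ne hb2] at hφt0
    exact hφt0 rfl
  exact hte (el_eq hb1 (hA b htA hb1 hb2 hte) hb2 (hB b htB hb1 hb2 hte))

theorem prefix_single {α : Type*} {es : List α} {f : α} (h : es <+: [f]) :
    es = [] ∨ es = [f] := by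
  rcases es with _ | ⟨x, xs⟩
  · exact Or.inl rfl
  · obtain ⟨t, ht⟩ := h
    simp at ht
    right
    rw [ht.1, ht.2.1]

theorem cons_of_prefix_single {α : Type*} {es l : List α} {f : α}
    (h : [f] <+: es) (hd : l = es.drop 1) : es = f :: l := by
  obtain ⟨t, ht⟩ := h
  subst hd
  rw [← ht]
  rfl

theorem isolated_el
    (hsep : ∀ a : GIS src rng,
      Continuous (fun x => a * x) ∧ Continuous (fun x => x * a)) :
    ∀ (n : ℕ) (a : GISElem src rng), a.1.1.edges.length + a.1.2.edges.length = n →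
      IsOpen ({el a} : Set (GIS src rng)) := by
  intro n
  induction n with
  | zero =>
    intro a ha
    obtain ⟨h1, h2⟩ := Nat.add_eq_zero.mp ha
    rw [List.length_eq_zero_iff] at h1 h2
    have hs : a.1.1.start = a.1.2.start := by
      have := a.2
      rw [a.1.1.range_nil h1, a.1.2.range_nil h2] at this
      exact this
    have : el a = eV a.1.1.start := el_eq rfl h1 hs.symm h2
    rw [this]
    exact isolated_vertex hsep _
  | succ n ih =>
    intro a ha
    rcases hu : a.1.1.edges with _ | ⟨f, l⟩
    · rcases hv : a.1.2.edges with _ | ⟨g, l⟩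
      · rw [hu, hv] at ha; simp at ha
      · -- strip the first edge of the second path
        have hpath := isPathFrom_cons (hv ▸ a.1.2.isPath)
        have hr : a.1.1.range = (⟨rng g, l, hpath.2⟩ : GPath src rng).range :=
          a.2.trans (a.1.2.range_cons hv)
        obtain ⟨x', h1s, h1e, h2s, h2e⟩ :
            ∃ x' : GISElem src rng, x'.1.1.start = a.1.1.start ∧
              x'.1.1.edges = a.1.1.edges ∧ x'.1.2.start = rng g ∧ x'.1.2.edges = l :=
          ⟨⟨(a.1.1, ⟨rng g, l, hpath.2⟩), hr⟩, rfl, rfl, rfl, rfl⟩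
        have hopen' : IsOpen ({el x'} : Set (GIS src rng)) := by
          refine ih x' ?_
          rw [h1e, h2e, hu]
          rw [hu, hv] at ha
          simp at ha ⊢
          omega
        have hF : Continuous (fun t : GIS src rng => t * fP g) := (hsep _).2
        have hFx : (el a : GIS src rng) * fP g = el x' :=
          el_mul_fP hv hpath.1.symm h1s h1e h2s h2e
        have hPo : IsOpen ((fun t : GIS src rng => t * fP g) ⁻¹' {el x'}) :=
          hopen'.preimage hF
        have hkey : (fun t : GIS src rng => t * fP g) ⁻¹' {el x'} = {el a} := by
          ext t
          simp only [Set.mem_preimage, Set.mem_singleton_iff]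
          constructor
          · intro ht
            have ht0 : t ≠ 0 := by
              intro h
              rw [h, GIS.zero_mul] at ht
              exact el_ne_zero x' ht.symm
            obtain ⟨b, rfl⟩ := GIS.exists_el ht0
            rcases mul_cases ht with ⟨k1, k2, k3, k4, k5, k6⟩ | ⟨k1, k2, k3, k4, k5, k6⟩
            · simp only [fPe_11s, fPe_11e, fPe_12s, fPe_12e] at k1 k2 k3 k4 k5 k6
              rw [h2e] at k6
              rw [h1e, hu] at k4
              rcases prefix_single k2 with hb2 | hb2
              · rw [hb2] at k4
                simp at k4
              · rw [hb2] at k4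
                simp at k4
                refine congrArg el (elem_ext (k3.symm.trans h1s) (by rw [k4, hu])
                  (k1.trans hpath.1) (by rw [hb2, hv, k6]))
            · simp only [fPe_11s, fPe_11e, fPe_12s, fPe_12e] at k1 k2 k3 k4 k5 k6
              rw [h2e] at k6
              simp only [List.nil_append] at k6
              have hb2 := cons_of_prefix_single k2 k6
              refine congrArg el (elem_ext (k3.symm.trans h1s)
                (by rw [← k4, h1e]) (k1.symm.trans hpath.1) (by rw [hb2, hv]))
          · intro ht
            rw [ht]
            exact hFx
        rw [← hkey]
        exact hPo
    · -- strip the first edge of the first path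
      have hpath := isPathFrom_cons (hu ▸ a.1.1.isPath)
      have hr : (⟨rng f, l, hpath.2⟩ : GPath src rng).range = a.1.2.range :=
        (a.1.1.range_cons hu).symm.trans a.2
      obtain ⟨x', h1s, h1e, h2s, h2e⟩ :
          ∃ x' : GISElem src rng, x'.1.1.start = rng f ∧
            x'.1.1.edges = l ∧ x'.1.2.start = a.1.2.start ∧ x'.1.2.edges = a.1.2.edges :=
        ⟨⟨(⟨rng f, l, hpath.2⟩, a.1.2), hr⟩, rfl, rfl, rfl, rfl⟩
      have hopen' : IsOpen ({el x'} : Set (GIS src rng)) := by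
        refine ih x' ?_
        rw [hu] at ha
        rw [h1e, h2e]
        simp at ha
        omega
      have hF : Continuous (fun t : GIS src rng => fI f * t) := (hsep _).1
      have hFx : (fI f : GIS src rng) * el a = el x' :=
        fI_mul_el hu hpath.1.symm h1s h1e h2s h2e
      have hPo : IsOpen ((fun t : GIS src rng => fI f * t) ⁻¹' {el x'}) :=
        hopen'.preimage hF
      have haP : el a ∈ (fun t : GIS src rng => fI f * t) ⁻¹' {el x'} := by
        simp only [Set.mem_preimage, hFx]
        rfl
      have hchar : ∀ b : GISElem src rng, (fI f : GIS src rng) * el b = el x' →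
          b = a ∨ (b.1.1.start = src f ∧ b.1.1.edges = [] ∧
            b.1.2.start = a.1.2.start ∧ b.1.2.edges ++ [f] = a.1.2.edges) := by
        intro b hb
        rcases mul_cases hb with ⟨k1, k2, k3, k4, k5, k6⟩ | ⟨k1, k2, k3, k4, k5, k6⟩
        · simp only [fIe_11s, fIe_11e, fIe_12s, fIe_12e] at k1 k2 k3 k4 k5 k6
          rw [h1e] at k4
          simp only [List.nil_append] at k4
          have hb1 := cons_of_prefix_single k2 k4
          exact Or.inl (elem_ext (k1.symm.trans hpath.1) (by rw [hb1, hu])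
            (k5.symm.trans h2s) (k6.symm.trans h2e))
        · simp only [fIe_11s, fIe_11e, fIe_12s, fIe_12e] at k1 k2 k3 k4 k5 k6
          rw [h1e] at k4
          rw [h2e] at k6
          rcases prefix_single k2 with hb1 | hb1
          · right
            rw [hb1] at k6
            simp only [List.length_nil, List.drop_zero] at k6
            exact ⟨k1, hb1, k5.symm.trans h2s, k6.symm⟩
          · left
            rw [hb1] at k6
            simp only [List.length_cons, List.length_nil, List.drop_one,
              List.tail_cons, List.drop_succ_cons, List.drop_nil, List.append_nil] at k6
            exact elem_ext (k1.trans hpath.1) (by rw [hb1, hu, k4])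
              (k5.symm.trans h2s) k6.symm
      have hsub : (((fun t : GIS src rng => fI f * t) ⁻¹' {el x'}) \ {el a}).Subsingleton := by
        rintro t ⟨htP, htne⟩ t' ⟨htP', htne'⟩
        simp only [Set.mem_preimage, Set.mem_singleton_iff] at htP htP'
        simp only [Set.mem_singleton_iff] at htne htne'
        have ht0 : t ≠ 0 := fun h => el_ne_zero x' (by rw [h, mul_zero'] at htP; exact htP.symm)
        have ht0' : t' ≠ 0 := fun h => el_ne_zero x' (by rw [h, mul_zero'] at htP'; exact htP'.symm)
        obtain ⟨b, rfl⟩ := GIS.exists_el ht0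
        obtain ⟨b', rfl⟩ := GIS.exists_el ht0'
        rcases hchar b htP with rfl | ⟨m1, m2, m3, m4⟩
        · exact absurd rfl htne
        rcases hchar b' htP' with rfl | ⟨m1', m2', m3', m4'⟩
        · exact absurd rfl htne'
        refine congrArg el (elem_ext (m1.trans m1'.symm) (m2.trans m2'.symm)
          (m3.trans m3'.symm) ?_)
        have := m4.trans m4'.symm
        exact List.append_cancel_right this
      have hDcl : IsClosed (((fun t : GIS src rng => fI f * t) ⁻¹' {el x'}) \ {el a}) :=
        hsub.finite.isClosed
      have : ({el a} : Set (GIS src rng)) =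
          ((fun t : GIS src rng => fI f * t) ⁻¹' {el x'}) \
            (((fun t : GIS src rng => fI f * t) ⁻¹' {el x'}) \ {el a}) := by
        ext t
        simp only [Set.mem_diff, Set.mem_singleton_iff]
        constructor
        · rintro rfl
          exact ⟨haP, fun h => h.2 rfl⟩
        · rintro ⟨htP, hn⟩
          by_contra hne
          exact hn ⟨htP, hne⟩
      rw [this]
      exact hPo.sdiff hDcl
end Isolation

end GISPaper

open GISPaper in
/-- For a Hausdorff topology `τ` on a graph inverse semigroup `G(E)`
making the multiplication separately continuous, the following are equivalent:
compactness, countable compactness, feeble compactness, CLP-compactness, `τ = τ_c`. -/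
theorem statement2 {V E : Type*} (src rng : E → V)
    (τ : TopologicalSpace (GIS src rng)) (hT2 : @T2Space _ τ)
    (hsep : ∀ a : GIS src rng,
      @Continuous _ _ τ τ (fun x => a * x) ∧ @Continuous _ _ τ τ (fun x => x * a)) :
    List.TFAE [@CompactSpace _ τ,
      @GISPaper.CountablyCompactSpace _ τ,
      @FeeblyCompact _ τ,
      @CLPCompact _ τ,
      τ = tauC (GIS src rng)] := by
  letI := τ
  haveI := hT2
  haveI hT1 : T1Space (GIS src rng) := inferInstance
  have hiso : ∀ x : GIS src rng, x ≠ 0 → IsOpen ({x} : Set (GIS src rng)) := by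
    intro x hx
    obtain ⟨b, rfl⟩ := GIS.exists_el hx
    exact isolated_el (fun a => hsep a) _ b rfl
  have hopen_of : ∀ s : Set (GIS src rng), (0 : GIS src rng) ∉ s → IsOpen s := by
    intro s h0
    rw [← Set.biUnion_of_singleton s]
    exact isOpen_biUnion fun x hx => hiso x (fun h => h0 (h ▸ hx))
  have key : (∀ U : Set (GIS src rng), IsOpen U → (0 : GIS src rng) ∈ U → Uᶜ.Finite) →
      τ = tauC (GIS src rng) := by
    intro hcof
    apply TopologicalSpace.ext
    funext s
    apply propext
    constructor
    · intro hs
      exact fun h0 => hcof s hs h0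
    · intro hs
      by_cases h0 : (0 : GIS src rng) ∈ s
      · have hfin : sᶜ.Finite := hs h0
        simpa using hfin.isClosed.isOpen_compl
      · exact hopen_of s h0
  tfae_have 1 → 2 := by
    intro h1
    haveI := h1
    exact fun B hB => hB.exists_accPt_principal
  tfae_have 2 → 3 := by
    intro h2 𝒰 hop hlf
    by_contra hinf
    have h𝒰 : 𝒰.Infinite := hinf
    choose c hc using fun (U : Set (GIS src rng)) (hU : U ∈ 𝒰) => (hop U hU).2
    choose N hN hNfin using hlf
    by_cases hfib : ∃ x, {U | ∃ hU : U ∈ 𝒰, c U hU = x}.Infinite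
    · obtain ⟨x, hx⟩ := hfib
      refine (hNfin x).not_infinite (hx.mono ?_)
      rintro U ⟨hU, hcU⟩
      exact ⟨hU, ⟨x, hcU ▸ hc U hU, mem_of_mem_nhds (hN x)⟩⟩
    · push_neg at hfib
      set P := {x : GIS src rng | ∃ U, ∃ hU : U ∈ 𝒰, c U hU = x} with hPdef
      by_cases hP : P.Finite
      · refine h𝒰 ?_
        have hsub : 𝒰 ⊆ ⋃ x ∈ P, {U | ∃ hU : U ∈ 𝒰, c U hU = x} := by
          intro U hU
          exact Set.mem_biUnion ⟨U, hU, rfl⟩ ⟨hU, rfl⟩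
        exact ((hP.biUnion (fun x _ => hfib x)).subset hsub)
      · have hPinf : P.Infinite := hP
        obtain ⟨z, hz⟩ := h2 P hPinf
        rw [accPt_iff_nhds] at hz
        have hPN : (P ∩ N z).Finite := by
          have himg := ((hNfin z).dependent_image (fun U hU => c U hU.1))
          refine himg.subset ?_
          rintro y ⟨⟨Uu, hUu, rfl⟩, hyN⟩
          exact ⟨Uu, ⟨hUu, ⟨c Uu hUu, hc Uu hUu, hyN⟩⟩, rfl⟩
        have hM : (N z ∩ ((P ∩ N z) \ {z})ᶜ) ∈ nhds z := by
          refine Filter.inter_mem (hN z) ?_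
          refine ((hPN.subset Set.diff_subset).isClosed).isOpen_compl.mem_nhds ?_
          simp
        obtain ⟨y, hy, hyz⟩ := hz _ hM
        exact hy.1.2 ⟨⟨hy.2, hy.1.1⟩, hyz⟩
  tfae_have 3 → 5 := by
    intro h3
    refine key ?_
    intro U hU h0
    by_contra hinf
    have hUc : Uᶜ.Infinite := hinf
    have h1 : ∀ W ∈ (fun x => ({x} : Set (GIS src rng))) '' Uᶜ, IsOpen W ∧ W.Nonempty := by
      rintro W ⟨x, hx, rfl⟩
      exact ⟨hiso x (fun h => hx (h ▸ h0)), Set.singleton_nonempty x⟩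
    have h2' : ∀ y : GIS src rng, ∃ N ∈ nhds y,
        {W ∈ (fun x => ({x} : Set (GIS src rng))) '' Uᶜ | (W ∩ N).Nonempty}.Finite := by
      intro y
      by_cases hy : y = 0
      · subst hy
        refine ⟨U, hU.mem_nhds h0, ?_⟩
        convert Set.finite_empty
        rw [Set.eq_empty_iff_forall_notMem]
        rintro W ⟨⟨x, hx, rfl⟩, z, hz⟩
        rw [Set.mem_inter_iff, Set.mem_singleton_iff] at hz
        exact hx (hz.1 ▸ hz.2)
      · refine ⟨{y}, (hiso y hy).mem_nhds rfl, ?_⟩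
        refine (Set.finite_singleton ({y} : Set (GIS src rng))).subset ?_
        rintro W ⟨⟨x, hx, rfl⟩, z, hz⟩
        rw [Set.mem_inter_iff, Set.mem_singleton_iff, Set.mem_singleton_iff] at hz
        rw [Set.mem_singleton_iff, ← hz.1, hz.2]
    exact hUc (Set.Finite.of_finite_image (h3 _ h1 h2') (Set.singleton_injective.injOn))
  tfae_have 5 → 1 := by
    intro h5
    have hof : ∀ s : Set (GIS src rng), IsOpen s → (0 : GIS src rng) ∈ s → sᶜ.Finite := by
      intro s hs
      have hs' : @IsOpen _ (tauC (GIS src rng)) s := h5 ▸ (show @IsOpen _ τ s from hs)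
      exact hs'
    classical
    constructor
    rw [isCompact_iff_finite_subcover]
    intro ι Uop hUo hcov
    have h0 : (0 : GIS src rng) ∈ ⋃ i, Uop i := hcov (Set.mem_univ 0)
    rw [Set.mem_iUnion] at h0
    obtain ⟨i₀, hi₀⟩ := h0
    have hfin := hof _ (hUo i₀) hi₀
    have hch : ∀ x ∈ (Uop i₀)ᶜ, ∃ i, x ∈ Uop i :=
      fun x _ => Set.mem_iUnion.mp (hcov (Set.mem_univ x))
    choose g hg using hch
    refine ⟨insert i₀ (hfin.toFinset.attach.image
      (fun x => g x.1 ((Set.Finite.mem_toFinset hfin).mp x.2))), ?_⟩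
    intro x _
    simp only [Set.mem_iUnion]
    by_cases hx : x ∈ Uop i₀
    · exact ⟨i₀, Finset.mem_insert_self _ _, hx⟩
    · refine ⟨g x hx, Finset.mem_insert_of_mem ?_, hg x hx⟩
      exact Finset.mem_image.mpr ⟨⟨x, (Set.Finite.mem_toFinset hfin).mpr hx⟩, Finset.mem_attach _ _, rfl⟩
  tfae_have 1 → 4 := by
    intro h1
    haveI := h1
    intro 𝒰 hcl hcov
    have hcov' : Set.univ ⊆ ⋃ U : 𝒰, (U : Set (GIS src rng)) := by
      rw [← Set.sUnion_eq_iUnion, hcov]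
    obtain ⟨t, ht⟩ := isCompact_univ.elim_finite_subcover
      (fun U : 𝒰 => (U : Set (GIS src rng))) (fun U => (hcl U U.2).2) hcov'
    refine ⟨Subtype.val '' (t : Set 𝒰), ?_, t.finite_toSet.image _, ?_⟩
    · rintro W ⟨Uu, _, rfl⟩
      exact Uu.2
    · apply Set.eq_univ_of_univ_subset
      intro x hx
      have := ht hx
      simp only [Set.mem_iUnion] at this
      obtain ⟨Uu, hUt, hxU⟩ := this
      exact ⟨Uu, ⟨Uu, hUt, rfl⟩, hxU⟩
  tfae_have 4 → 5 := by
    intro h4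
    refine key ?_
    intro U hU h0
    by_contra hinf
    have hUc : Uᶜ.Infinite := hinf
    have hDo : IsOpen Uᶜ := hopen_of _ (by simp [h0])
    have hcl : ∀ W ∈ insert U ((fun x => ({x} : Set (GIS src rng))) '' Uᶜ), IsClopen W := by
      rintro W (rfl | ⟨x, hx, rfl⟩)
      · exact ⟨isOpen_compl_iff.mp hDo, hU⟩
      · exact ⟨isClosed_singleton, hiso x (fun h => hx (h ▸ h0))⟩
    have hcov : ⋃₀ insert U ((fun x => ({x} : Set (GIS src rng))) '' Uᶜ) = Set.univ := by
      apply Set.eq_univ_of_univ_subset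
      intro x _
      by_cases hx : x ∈ U
      · exact ⟨U, Set.mem_insert _ _, hx⟩
      · exact ⟨{x}, Set.mem_insert_of_mem _ ⟨x, hx, rfl⟩, rfl⟩
    obtain ⟨ℱ, hsub, hfin, hcoveq⟩ := h4 _ hcl hcov
    have hT : {x : GIS src rng | ({x} : Set (GIS src rng)) ∈ ℱ}.Finite := by
      refine Set.Finite.of_finite_image (hfin.subset ?_) (Set.singleton_injective.injOn)
      rintro W ⟨x, hx, rfl⟩
      exact hx
    obtain ⟨d, hd⟩ := (hUc.diff hT).nonempty
    have hdU : d ∈ ⋃₀ ℱ := by rw [hcoveq]; trivial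
    obtain ⟨W, hWF, hdW⟩ := hdU
    rcases hsub hWF with rfl | ⟨x, hx, rfl⟩
    · exact hd.1 hdW
    · rw [Set.mem_singleton_iff] at hdW
      refine hd.2 ?_
      show ({d} : Set (GIS src rng)) ∈ ℱ
      rw [hdW]
      exact hWF
  tfae_finish
end
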